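/- The map ~ : Γ_P → P⊗ker ε intertwines the right coactions: Δ_R ∘ ~ = (~⊗id) ∘ Δ_R, where Γ_P carries the coaction induced from Δ_R on P⊗P and P⊗ker ε carries the coaction Δ_R(u⊗a) = Σ u^(1̄)⊗a₍₂₎⊗u^(2̄)(Sa₍₁₎)a₍₃₎. -/

import Mathlib

/- STATEMENT 11: The map ~ intertwines the right coactions:
Δ_R ∘ ~ = (~⊗id) ∘ Δ_R, where Γ_P ⊂ P⊗P carries the diagonal coaction and
P⊗A carries the coaction u⊗a ↦ Σ u^(1̄)⊗a₍₂₎⊗u^(2̄)(Sa₍₁₎)a₍₃₎. -/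

open TensorProduct

/-- The right adjoint coaction a ↦ Σ a₍₂₎ ⊗ (Sa₍₁₎)a₍₃₎. -/
noncomputable def AdR (k A : Type*) [Field k] [Ring A] [HopfAlgebra k A] :
    A →ₗ[k] A ⊗[k] A :=
  (LinearMap.lTensor A (LinearMap.mul' k A)) ∘ₗ
    (TensorProduct.assoc k A A A).toLinearMap ∘ₗ
    (LinearMap.rTensor A (TensorProduct.comm k A A).toLinearMap) ∘ₗ
    (TensorProduct.assoc k A A A).symm.toLinearMap ∘ₗ
    (LinearMap.rTensor (A ⊗[k] A) (HopfAlgebra.antipode (R := k) (A := A))) ∘ₗ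
    (LinearMap.lTensor A (Coalgebra.comul (R := k) (A := A))) ∘ₗ
    (Coalgebra.comul (R := k) (A := A))

/-- The map ~ = (·⊗id)∘(id⊗Δ_R) on universal one-forms (defined on all of P⊗P). -/
noncomputable def tildeMap {k A P : Type*} [Field k] [Ring A] [HopfAlgebra k A]
    [Ring P] [Algebra k P] (ΔR : P →ₐ[k] P ⊗[k] A) :
    P ⊗[k] P →ₗ[k] P ⊗[k] A :=
  (LinearMap.rTensor A (LinearMap.mul' k P)) ∘ₗ
    (TensorProduct.assoc k P P A).symm.toLinearMap ∘ₗ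
    (LinearMap.lTensor P ΔR.toLinearMap)

/-- The diagonal coaction of A on P⊗P: u⊗v ↦ Σ u^(1̄)⊗v^(1̄)⊗u^(2̄)v^(2̄). -/
noncomputable def diagCoaction {k A P : Type*} [Field k] [Ring A] [HopfAlgebra k A]
    [Ring P] [Algebra k P] (ΔR : P →ₐ[k] P ⊗[k] A) :
    P ⊗[k] P →ₗ[k] (P ⊗[k] P) ⊗[k] A :=
  (LinearMap.lTensor (P ⊗[k] P) (LinearMap.mul' k A)) ∘ₗ
    (TensorProduct.tensorTensorTensorComm k P A P A).toLinearMap ∘ₗ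
    (TensorProduct.map ΔR.toLinearMap ΔR.toLinearMap)

/-- The coaction of A on P⊗A: u⊗a ↦ Σ (u^(1̄)⊗a₍₂₎) ⊗ u^(2̄)(Sa₍₁₎)a₍₃₎. -/
noncomputable def coactionPA {k A P : Type*} [Field k] [Ring A] [HopfAlgebra k A]
    [Ring P] [Algebra k P] (ΔR : P →ₐ[k] P ⊗[k] A) :
    P ⊗[k] A →ₗ[k] (P ⊗[k] A) ⊗[k] A :=
  (LinearMap.lTensor (P ⊗[k] A) (LinearMap.mul' k A)) ∘ₗ
    (TensorProduct.tensorTensorTensorComm k P A A A).toLinearMap ∘ₗ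
    (TensorProduct.map ΔR.toLinearMap (AdR k A))

open Coalgebra HopfAlgebra LinearMap in
lemma AdR_repr {k A : Type*} [Field k] [Ring A] [HopfAlgebra k A]
    (c : A) (r1 : Coalgebra.Repr k c (A × A)) (r2 : ∀ j, Coalgebra.Repr k (r1.right j) (A × A)) :
    AdR k A c = ∑ j ∈ r1.index, ∑ l ∈ (r2 j).index,
      (r2 j).left l ⊗ₜ[k]
        (HopfAlgebra.antipode (R := k) (r1.left j) * (r2 j).right l) := by
  rw [AdR]
  simp only [LinearMap.comp_apply]
  rw [← r1.eq]
  simp only [map_sum, LinearMap.lTensor_tmul]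
  refine Finset.sum_congr rfl fun j _ => ?_
  rw [← (r2 j).eq]
  simp [tmul_sum, map_sum, LinearMap.rTensor_tmul, LinearMap.lTensor_tmul,
    TensorProduct.assoc_symm_tmul, TensorProduct.assoc_tmul, TensorProduct.comm_tmul,
    LinearMap.mul'_apply]

open Coalgebra HopfAlgebra LinearMap in
lemma keyHopf {k A : Type*} [Field k] [Ring A] [HopfAlgebra k A]
    (a : A) (r : Coalgebra.Repr k a (A × A)) (r1 : ∀ i, Coalgebra.Repr k (r.right i) (A × A))
    (r2 : ∀ i j, Coalgebra.Repr k ((r1 i).right j) (A × A)) :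
    ∑ i ∈ r.index, ∑ j ∈ (r1 i).index, ∑ l ∈ (r2 i j).index,
      (r2 i j).left l ⊗ₜ[k]
        (r.left i * (HopfAlgebra.antipode (R := k) ((r1 i).left j) * (r2 i j).right l))
      = Coalgebra.comul (R := k) a := by
  classical
  have haux : ∑ i ∈ r.index, Coalgebra.counit (R := k) (r.left i) • r.right i = a := by
    have h := congrArg (TensorProduct.lid k A) (Coalgebra.sum_counit_tmul_eq (R := k) r)
    simp only [map_sum, TensorProduct.lid_tmul, one_smul] at h
    exact h
  set r1' : ∀ i, Coalgebra.Repr k (r.left i) (A × A) := fun i => Coalgebra.Repr.arbitrary k (r.left i)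
    with hr1'
  have hco := Coalgebra.sum_tmul_tmul_eq (R := k) r r1' r1
  set M : A ⊗[k] (A ⊗[k] A) →ₗ[k] A ⊗[k] A :=
    (LinearMap.rTensor A
        (LinearMap.mul' k A ∘ₗ LinearMap.lTensor A (HopfAlgebra.antipode (R := k)))) ∘ₗ
      (TensorProduct.assoc k A A A).symm.toLinearMap with hM
  have hMt : ∀ x y z : A, M (x ⊗ₜ[k] (y ⊗ₜ[k] z)) =
      (x * HopfAlgebra.antipode (R := k) y) ⊗ₜ[k] z := by
    intro x y z
    simp [hM, LinearMap.mul'_apply]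
  have hW0 := congrArg M hco
  simp only [map_sum, hMt] at hW0
  have hW : (∑ i ∈ r.index, ∑ j ∈ (r1 i).index,
      (r.left i * HopfAlgebra.antipode (R := k) ((r1 i).left j)) ⊗ₜ[k] (r1 i).right j)
      = (1 : A) ⊗ₜ[k] a := by
    rw [← hW0]
    calc ∑ i ∈ r.index, ∑ j ∈ (r1' i).index,
        ((r1' i).left j * HopfAlgebra.antipode (R := k) ((r1' i).right j)) ⊗ₜ[k] r.right i
        = ∑ i ∈ r.index, (algebraMap k A (Coalgebra.counit (R := k) (r.left i))) ⊗ₜ[k] r.right i := by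
          refine Finset.sum_congr rfl fun i _ => ?_
          rw [← TensorProduct.sum_tmul, HopfAlgebra.sum_mul_antipode_eq_algebraMap_counit (r1' i)]
      _ = (1 : A) ⊗ₜ[k] a := by
          simp only [Algebra.algebraMap_eq_smul_one, TensorProduct.smul_tmul]
          rw [← tmul_sum, haux]
  set T : A ⊗[k] (A ⊗[k] A) →ₗ[k] A ⊗[k] A :=
    (LinearMap.lTensor A (LinearMap.mul' k A)) ∘ₗ
      (TensorProduct.leftComm k A A A).toLinearMap with hT
  have hTt : ∀ x y z : A, T (x ⊗ₜ[k] (y ⊗ₜ[k] z)) = y ⊗ₜ[k] (x * z) := by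
    intro x y z
    simp [hT, TensorProduct.leftComm_tmul, LinearMap.mul'_apply]
  have hL : T (((Coalgebra.comul (R := k)).lTensor A)
      (∑ i ∈ r.index, ∑ j ∈ (r1 i).index,
        (r.left i * HopfAlgebra.antipode (R := k) ((r1 i).left j)) ⊗ₜ[k] (r1 i).right j)) =
      ∑ i ∈ r.index, ∑ j ∈ (r1 i).index, ∑ l ∈ (r2 i j).index,
      (r2 i j).left l ⊗ₜ[k]
        (r.left i * (HopfAlgebra.antipode (R := k) ((r1 i).left j) * (r2 i j).right l)) := by
    simp only [map_sum, LinearMap.lTensor_tmul]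
    refine Finset.sum_congr rfl fun i _ => Finset.sum_congr rfl fun j _ => ?_
    rw [← (r2 i j).eq]
    simp [tmul_sum, map_sum, hTt, mul_assoc]
  have hR : T (((Coalgebra.comul (R := k)).lTensor A) ((1 : A) ⊗ₜ[k] a)) =
      Coalgebra.comul (R := k) a := by
    rw [LinearMap.lTensor_tmul, ← r.eq]
    simp [tmul_sum, map_sum, hTt]
  rw [← hL, hW, hR]

set_option synthInstance.maxHeartbeats 800000
set_option maxHeartbeats 1600000

/-- Auxiliary map for the LHS. -/
noncomputable def Lmap {k A P : Type*} [Field k] [Ring A] [HopfAlgebra k A]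
    [Ring P] [Algebra k P] (w : P ⊗[k] A) :
    (P ⊗[k] A) ⊗[k] A →ₗ[k] (P ⊗[k] A) ⊗[k] A :=
  (LinearMap.lTensor (P ⊗[k] A) (LinearMap.mul' k A)) ∘ₗ
    (TensorProduct.tensorTensorTensorComm k P A A A).toLinearMap ∘ₗ
    (TensorProduct.map (LinearMap.mulLeft k w) (AdR k A))

/-- Auxiliary map for the RHS. -/
noncomputable def Rmap {k A P : Type*} [Field k] [Ring A] [HopfAlgebra k A]
    [Ring P] [Algebra k P] (w : P ⊗[k] A) :
    (P ⊗[k] A) ⊗[k] A →ₗ[k] (P ⊗[k] A) ⊗[k] A :=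
  (TensorProduct.map
      ((LinearMap.rTensor A (LinearMap.mul' k P)) ∘ₗ
        (TensorProduct.assoc k P P A).symm.toLinearMap)
      (LinearMap.mul' k A)) ∘ₗ
    (TensorProduct.tensorTensorTensorComm k P A (P ⊗[k] A) A).toLinearMap ∘ₗ
    (TensorProduct.mk k (P ⊗[k] A) ((P ⊗[k] A) ⊗[k] A) w)

lemma lhs_eq {k A P : Type*} [Field k] [Ring A] [HopfAlgebra k A]
    [Ring P] [Algebra k P] (ΔR : P →ₐ[k] P ⊗[k] A) (u : P) (x : P ⊗[k] A) :
    coactionPA ΔR ((LinearMap.rTensor A (LinearMap.mul' k P))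
        ((TensorProduct.assoc k P P A).symm (u ⊗ₜ[k] x)))
      = Lmap (ΔR u) ((ΔR.toLinearMap.rTensor A) x) := by
  induction x using TensorProduct.induction_on with
  | zero => simp
  | tmul p b =>
      simp [coactionPA, Lmap, TensorProduct.assoc_symm_tmul, LinearMap.rTensor_tmul,
        LinearMap.mul'_apply, TensorProduct.map_tmul, LinearMap.mulLeft_apply, map_mul]
  | add x y hx hy =>
      simp only [tmul_add, map_add, hx, hy]

lemma rhs_eq {k A P : Type*} [Field k] [Ring A] [HopfAlgebra k A]
    [Ring P] [Algebra k P] (ΔR : P →ₐ[k] P ⊗[k] A) (w : P ⊗[k] A) (x : P ⊗[k] A) :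
    ((tildeMap ΔR).rTensor A) ((LinearMap.lTensor (P ⊗[k] P) (LinearMap.mul' k A))
        ((TensorProduct.tensorTensorTensorComm k P A P A) (w ⊗ₜ[k] x)))
      = Rmap w ((ΔR.toLinearMap.rTensor A) x) := by
  induction x using TensorProduct.induction_on with
  | zero => simp
  | tmul p b =>
      induction w using TensorProduct.induction_on with
      | zero => simp [Rmap]
      | tmul u0 u1 =>
          simp [tildeMap, Rmap, TensorProduct.tensorTensorTensorComm_tmul,
            LinearMap.mul'_apply, TensorProduct.mk_apply]
      | add w1 w2 h1 h2 =>
          simp only [add_tmul, map_add, h1, h2, Rmap, LinearMap.comp_apply,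
            TensorProduct.mk_apply]
          simp [add_tmul, map_add]
  | add x y hx hy =>
      simp only [tmul_add, map_add, hx, hy]

lemma LR_eq {k A P : Type*} [Field k] [Ring A] [HopfAlgebra k A]
    [Ring P] [Algebra k P] (w : P ⊗[k] A) (x : P ⊗[k] A) :
    Lmap w ((TensorProduct.assoc k P A A).symm
        (((Coalgebra.comul (R := k) (A := A)).lTensor P) x)) =
    Rmap w ((TensorProduct.assoc k P A A).symm
        (((Coalgebra.comul (R := k) (A := A)).lTensor P) x)) := by
  induction x using TensorProduct.induction_on with
  | zero => simp
  | tmul p a =>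
      set r : Coalgebra.Repr k a (A × A) := Coalgebra.Repr.arbitrary k a with hr
      set r1 : ∀ i, Coalgebra.Repr k (r.right i) (A × A) :=
        fun i => Coalgebra.Repr.arbitrary k (r.right i) with hr1
      set r2 : ∀ i j, Coalgebra.Repr k ((r1 i).right j) (A × A) :=
        fun i j => Coalgebra.Repr.arbitrary k ((r1 i).right j) with hr2
      rw [LinearMap.lTensor_tmul, ← r.eq]
      simp only [tmul_sum, map_sum, TensorProduct.assoc_symm_tmul]
      induction w using TensorProduct.induction_on with
      | zero =>
          simp [Lmap, Rmap]
      | tmul u0 u1 =>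
          have hkey := congrArg
            (TensorProduct.map (TensorProduct.mk k P A (u0 * p)) (LinearMap.mulLeft k u1))
            (keyHopf a r r1 r2)
          rw [← r.eq] at hkey
          simp only [map_sum, TensorProduct.map_tmul, TensorProduct.mk_apply,
            LinearMap.mulLeft_apply] at hkey
          calc ∑ i ∈ r.index, Lmap (u0 ⊗ₜ[k] u1) ((p ⊗ₜ[k] r.left i) ⊗ₜ[k] r.right i)
              = ∑ i ∈ r.index, ∑ j ∈ (r1 i).index, ∑ l ∈ (r2 i j).index,
                  ((u0 * p) ⊗ₜ[k] (r2 i j).left l) ⊗ₜ[k]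
                    (u1 * (r.left i *
                      (HopfAlgebra.antipode (R := k) ((r1 i).left j) * (r2 i j).right l))) := by
                refine Finset.sum_congr rfl fun i _ => ?_
                rw [Lmap]
                simp only [LinearMap.comp_apply, LinearEquiv.coe_coe,
                  TensorProduct.map_tmul, LinearMap.mulLeft_apply,
                  Algebra.TensorProduct.tmul_mul_tmul]
                rw [AdR_repr (r.right i) (r1 i) (r2 i)]
                simp [tmul_sum, map_sum, TensorProduct.tensorTensorTensorComm_tmul,
                  LinearMap.mul'_apply, mul_assoc]
            _ = ∑ i ∈ r.index, ((u0 * p) ⊗ₜ[k] r.left i) ⊗ₜ[k] (u1 * r.right i) := hkey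
            _ = ∑ i ∈ r.index, Rmap (u0 ⊗ₜ[k] u1) ((p ⊗ₜ[k] r.left i) ⊗ₜ[k] r.right i) := by
                refine Finset.sum_congr rfl fun i _ => ?_
                rw [Rmap]
                simp [TensorProduct.tensorTensorTensorComm_tmul, LinearMap.mul'_apply]
      | add w1 w2 h1 h2 =>
          have hLadd : ∀ y : (P ⊗[k] A) ⊗[k] A,
              Lmap (w1 + w2) y = Lmap w1 y + Lmap w2 y := by
            intro y
            simp only [Lmap, LinearMap.comp_apply]
            rw [show LinearMap.mulLeft k (w1 + w2)
                = LinearMap.mulLeft k w1 + LinearMap.mulLeft k w2 by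
              ext z; simp [add_mul]]
            rw [show TensorProduct.map (LinearMap.mulLeft k w1 + LinearMap.mulLeft k w2)
                  (AdR k A) = TensorProduct.map (LinearMap.mulLeft k w1) (AdR k A)
                  + TensorProduct.map (LinearMap.mulLeft k w2) (AdR k A) from
              TensorProduct.map_add_left _ _ _]
            simp
          have hRadd : ∀ y : (P ⊗[k] A) ⊗[k] A,
              Rmap (w1 + w2) y = Rmap w1 y + Rmap w2 y := by
            intro y
            simp [Rmap, add_tmul]
          simp only [hLadd, hRadd, Finset.sum_add_distrib, h1, h2]
  | add x y hx hy =>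
      simp only [map_add, hx, hy]

theorem tilde_intertwines_coactions
    {k A P : Type*} [Field k] [Ring A] [HopfAlgebra k A]
    [Ring P] [Algebra k P]
    (ΔR : P →ₐ[k] P ⊗[k] A)
    (hcoassoc : (TensorProduct.assoc k P A A).toLinearMap ∘ₗ
        (ΔR.toLinearMap.rTensor A) ∘ₗ ΔR.toLinearMap =
        ((Coalgebra.comul (R := k) (A := A)).lTensor P) ∘ₗ ΔR.toLinearMap)
    (hcounit : (TensorProduct.rid k P).toLinearMap ∘ₗ
        ((Coalgebra.counit (R := k) (A := A)).lTensor P) ∘ₗ ΔR.toLinearMap =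
        LinearMap.id) :
    coactionPA ΔR ∘ₗ tildeMap ΔR = ((tildeMap ΔR).rTensor A) ∘ₗ diagCoaction ΔR := by
  apply TensorProduct.ext'
  intro u v
  have hE : (ΔR.toLinearMap.rTensor A) (ΔR v) =
      (TensorProduct.assoc k P A A).symm
        (((Coalgebra.comul (R := k) (A := A)).lTensor P) (ΔR v)) := by
    have h := LinearMap.congr_fun hcoassoc v
    simp only [LinearMap.comp_apply, AlgHom.toLinearMap_apply, LinearEquiv.coe_coe] at h
    rw [← h]
    simp
  calc (coactionPA ΔR ∘ₗ tildeMap ΔR) (u ⊗ₜ[k] v)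
      = coactionPA ΔR ((LinearMap.rTensor A (LinearMap.mul' k P))
          ((TensorProduct.assoc k P P A).symm (u ⊗ₜ[k] ΔR v))) := by
        simp [tildeMap]
    _ = Lmap (ΔR u) ((ΔR.toLinearMap.rTensor A) (ΔR v)) := lhs_eq ΔR u (ΔR v)
    _ = Rmap (ΔR u) ((ΔR.toLinearMap.rTensor A) (ΔR v)) := by
        rw [hE]; exact LR_eq (ΔR u) (ΔR v)
    _ = ((tildeMap ΔR).rTensor A) ((LinearMap.lTensor (P ⊗[k] P) (LinearMap.mul' k A))
          ((TensorProduct.tensorTensorTensorComm k P A P A) (ΔR u ⊗ₜ[k] ΔR v))) :=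
        (rhs_eq ΔR (ΔR u) (ΔR v)).symm
    _ = (((tildeMap ΔR).rTensor A) ∘ₗ diagCoaction ΔR) (u ⊗ₜ[k] v) := by
        simp [diagCoaction]
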